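/- For every integer j ≥ 1, the derivative of the composition q ↦ h(q̄_j(q)) tends to 0 as q → 0⁺; that is, lim_{q→0⁺} (log₂((1 − q̄_j(q))/q̄_j(q))) · q̄_j′(q) = 0, where for 0 < q < 1 small enough one has 0 < q̄_j(q) < 1 so that the composition is differentiable at q with derivative h′(q̄_j(q)) · q̄_j′(q) and h′(x) = log₂((1−x)/x). -/

import Mathlib

/-- `p̄_j(q) = (1 − (1−2q)^{2^j})/2`. -/
noncomputable def pbar (q : ℝ) (j : ℕ) : ℝ := (1 - (1 - 2 * q) ^ (2 ^ j)) / 2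

/-- `q̄_j(q) = p̄_{j−1}(q)²/(1 − p̄_j(q))`. -/
noncomputable def qbar (q : ℝ) (j : ℕ) : ℝ := (pbar q (j - 1)) ^ 2 / (1 - pbar q j)

/-- Binary entropy function (base 2), with `h(0) = h(1) = 0`. -/
noncomputable def binEnt (x : ℝ) : ℝ := -(x * Real.logb 2 x) - (1 - x) * Real.logb 2 (1 - x)

open Real Filter Set

noncomputable def Sg (j : ℕ) (q : ℝ) : ℝ := ∑ k ∈ Finset.range (2^j), (1 - 2*q)^k
noncomputable def Pd (j : ℕ) (q : ℝ) : ℝ := (2^j : ℝ) * (1 - 2*q)^(2^j - 1)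
noncomputable def Ff (j : ℕ) (q : ℝ) : ℝ := (Sg (j-1) q)^2 / (1 - q * Sg j q)
noncomputable def Bf (j : ℕ) (q : ℝ) : ℝ :=
  (2 * Sg (j-1) q * Pd (j-1) q * (1 - q * Sg j q) + q * (Sg (j-1) q)^2 * Pd j q)
    / (1 - q * Sg j q)^2

lemma pbar_eq_mul (q : ℝ) (j : ℕ) : pbar q j = q * Sg j q := by
  have h := geom_sum_mul (1 - 2*q) (2^j)
  rw [show (1 - 2*q) - 1 = -(2*q) by ring] at h
  unfold pbar Sg
  linarith [h]

lemma continuous_Sg (j : ℕ) : Continuous (Sg j) := by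
  apply continuous_finset_sum; intro i _; fun_prop

lemma continuous_Pd (j : ℕ) : Continuous (Pd j) := by
  unfold Pd; fun_prop

lemma hasDerivAt_pbar (j : ℕ) (q : ℝ) : HasDerivAt (fun x => pbar x j) (Pd j q) q := by
  have h1 : HasDerivAt (fun x : ℝ => 1 - 2*x) (-2) q := by
    simpa using ((hasDerivAt_id q).const_mul (2:ℝ)).const_sub 1
  have h2 : HasDerivAt (fun x : ℝ => (1 - 2*x)^(2^j))
      ((2^j : ℕ) * (1 - 2*q)^(2^j - 1) * (-2)) q := h1.pow _
  have h3 := (h2.const_sub 1).div_const 2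
  refine h3.congr_deriv ?_
  unfold Pd; push_cast; ring

lemma qbar_eq (q : ℝ) (j : ℕ) : qbar q j = q^2 * Ff j q := by
  unfold qbar Ff
  rw [pbar_eq_mul q (j-1), pbar_eq_mul q j, mul_pow, mul_div_assoc]

lemma hasDerivAt_qbar (j : ℕ) (q : ℝ) (hD : 1 - pbar q j ≠ 0) :
    HasDerivAt (fun x => qbar x j) (q * Bf j q) q := by
  have hN : HasDerivAt (fun x => (pbar x (j-1))^2) (2 * pbar q (j-1) * Pd (j-1) q) q := by
    have := (hasDerivAt_pbar (j-1) q).pow 2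
    exact this.congr_deriv (by push_cast; ring)
  have hDen : HasDerivAt (fun x => 1 - pbar x j) (-(Pd j q)) q := by
    simpa using (hasDerivAt_pbar j q).const_sub 1
  have h := hN.div hDen hD
  refine h.congr_deriv ?_
  rw [pbar_eq_mul q (j-1), pbar_eq_mul q j] at *
  unfold Bf
  field_simp
  ring

lemma hasDerivAt_binEnt {y : ℝ} (h0 : 0 < y) (h1 : y < 1) :
    HasDerivAt binEnt (Real.logb 2 ((1 - y) / y)) y := by
  have hy : y ≠ 0 := ne_of_gt h0
  have hy1 : 1 - y ≠ 0 := by linarith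
  have g1 : HasDerivAt (fun x : ℝ => x * log x) (log y + 1) y := Real.hasDerivAt_mul_log hy
  have hneg : HasDerivAt (fun x : ℝ => 1 - x) (-1) y := by
    simpa using (hasDerivAt_id y).const_sub 1
  have g2 : HasDerivAt (fun x : ℝ => (1 - x) * log (1 - x)) ((log (1 - y) + 1) * (-1)) y := by
    exact (Real.hasDerivAt_mul_log hy1).comp y hneg
  have G : HasDerivAt (fun x : ℝ => (-(x * log x) - (1 - x) * log (1 - x)) / log 2)
      ((-(log y + 1) - (log (1 - y) + 1) * (-1)) / log 2) y := (g1.neg.sub g2).div_const _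
  have hfun : binEnt = fun x : ℝ => (-(x * log x) - (1 - x) * log (1 - x)) / log 2 := by
    funext x
    unfold binEnt Real.logb
    ring
  rw [hfun]
  convert G using 1
  rw [Real.logb_div hy1 hy]
  unfold Real.logb
  ring

lemma Sg_bounds (k : ℕ) {q : ℝ} (h0 : 0 ≤ q) (h1 : q ≤ 1/2) :
    1 ≤ Sg k q ∧ Sg k q ≤ 2^k := by
  have hx0 : (0:ℝ) ≤ 1 - 2*q := by linarith
  have hx1 : (1:ℝ) - 2*q ≤ 1 := by linarith
  constructor
  · have := Finset.single_le_sum (f := fun i : ℕ => (1 - 2*q)^i)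
      (fun i _ => pow_nonneg hx0 i) (Finset.mem_range.mpr (Nat.two_pow_pos k))
    simpa [Sg] using this
  · calc Sg k q ≤ ∑ i ∈ Finset.range (2^k), (1:ℝ) :=
          Finset.sum_le_sum (fun i _ => pow_le_one₀ hx0 hx1)
    _ = 2^k := by simp

lemma Sg_mono (j : ℕ) {q : ℝ} (h0 : 0 ≤ q) (h1 : q ≤ 1/2) :
    Sg (j-1) q ≤ Sg j q := by
  have hx0 : (0:ℝ) ≤ 1 - 2*q := by linarith
  apply Finset.sum_le_sum_of_subset_of_nonneg
  · exact Finset.range_subset_range.mpr (Nat.pow_le_pow_right (by norm_num) (Nat.sub_le j 1))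
  · intro i _ _; exact pow_nonneg hx0 i

lemma key_bounds (j : ℕ) {q : ℝ} (hq : q ∈ Set.Ioo (0:ℝ) (1/2^(j+1))) :
    0 < qbar q j ∧ qbar q j < 1 ∧ 0 < 1 - q * Sg j q := by
  obtain ⟨hq0, hqe⟩ := hq
  have h2 : (2:ℝ)^1 ≤ 2^(j+1) := pow_le_pow_right₀ one_le_two (by omega)
  have hq12 : q ≤ 1/2 := by
    have : (1:ℝ)/2^(j+1) ≤ 1/2 := by
      apply one_div_le_one_div_of_le (by norm_num)
      simpa using h2
    linarith
  have hS := Sg_bounds j hq0.le hq12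
  have hS' := Sg_bounds (j-1) hq0.le hq12
  have hqS : q * Sg j q < 1/2 := by
    have h1 : q * Sg j q ≤ q * 2^j := mul_le_mul_of_nonneg_left hS.2 hq0.le
    have h2' : q * 2^j < (1/2^(j+1)) * 2^j :=
      mul_lt_mul_of_pos_right hqe (pow_pos two_pos j)
    have h3 : (1/2^(j+1) : ℝ) * 2^j = 1/2 := by
      rw [pow_succ]
      field_simp
    linarith
  have hD0 : 0 < 1 - q * Sg j q := by
    have : 0 ≤ q * Sg j q := mul_nonneg hq0.le (by linarith [hS.1])
    linarith
  have hqS' : q * Sg (j-1) q < 1/2 := by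
    have := mul_le_mul_of_nonneg_left (Sg_mono j hq0.le hq12) hq0.le
    linarith
  have hqS'0 : 0 < q * Sg (j-1) q := mul_pos hq0 (by linarith [hS'.1])
  have hqbar : qbar q j = (q * Sg (j-1) q)^2 / (1 - q * Sg j q) := by
    unfold qbar
    rw [pbar_eq_mul, pbar_eq_mul]
  refine ⟨?_, ?_, hD0⟩
  · rw [hqbar]
    positivity
  · rw [hqbar, div_lt_one hD0]
    nlinarith

lemma Sg_zero (k : ℕ) : Sg k 0 = 2^k := by simp [Sg]

lemma Sg_pos_at (j : ℕ) {q : ℝ} (hq : q ∈ Set.Ioo (0:ℝ) (1/2^(j+1))) (k : ℕ) :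
    0 < Sg k q := by
  obtain ⟨hq0, hqe⟩ := hq
  have h2 : (2:ℝ)^1 ≤ 2^(j+1) := pow_le_pow_right₀ one_le_two (by omega)
  have hq12 : q ≤ 1/2 := by
    have : (1:ℝ)/2^(j+1) ≤ 1/2 := by
      apply one_div_le_one_div_of_le (by norm_num)
      simpa using h2
    linarith
  linarith [(Sg_bounds k hq0.le hq12).1]


/-- For every `j ≥ 1`, the derivative of `q ↦ h(q̄_j(q))` tends to `0` as `q → 0⁺`:
`lim_{q→0⁺} log₂((1 − q̄_j(q))/q̄_j(q)) · q̄_j′(q) = 0`; moreover for small enough `q > 0`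
one has `0 < q̄_j(q) < 1` and the composition is differentiable at `q` with derivative
`h′(q̄_j(q)) · q̄_j′(q)` where `h′(x) = log₂((1−x)/x)`. -/
theorem deriv_binEnt_qbar_vanishes (j : ℕ) (hj : 1 ≤ j) :
    Filter.Tendsto
      (fun q => Real.logb 2 ((1 - qbar q j) / qbar q j) * deriv (fun x => qbar x j) q)
      (nhdsWithin 0 (Set.Ioi 0)) (nhds 0) ∧
    ∃ ε > (0 : ℝ), ∀ q ∈ Set.Ioo (0 : ℝ) ε,
      0 < qbar q j ∧ qbar q j < 1 ∧
      HasDerivAt (fun x => binEnt (qbar x j))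
        (Real.logb 2 ((1 - qbar q j) / qbar q j) * deriv (fun x => qbar x j) q) q := by
  have hεpos : (0:ℝ) < 1/2^(j+1) := by positivity
  constructor
  · -- the limit
    have hmem : Set.Ioo (0:ℝ) (1/2^(j+1)) ∈ nhdsWithin 0 (Set.Ioi 0) :=
      Ioo_mem_nhdsGT_of_mem ⟨le_refl 0, hεpos⟩
    -- continuity facts at 0
    have hSgc : ∀ k, Continuous (fun q => Sg k q) := continuous_Sg
    have hden1 : ((fun q : ℝ => 1 - q * Sg j q) 0) ≠ 0 := by simp
    have hdenc : Continuous (fun q : ℝ => 1 - q * Sg j q) :=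
      continuous_const.sub (continuous_id.mul (hSgc j))
    have hBfc : ContinuousAt (Bf j) 0 := by
      apply ContinuousAt.div
      · exact (((((continuous_const.mul (hSgc (j-1))).mul (continuous_Pd (j-1))).mul
          hdenc)).add ((continuous_id.mul ((hSgc (j-1)).pow 2)).mul (continuous_Pd j))).continuousAt
      · exact (hdenc.pow 2).continuousAt
      · simp
    have hFfc : ContinuousAt (Ff j) 0 := by
      apply ContinuousAt.div
      · exact ((hSgc (j-1)).pow 2).continuousAt
      · exact hdenc.continuousAt
      · simp
    have hFf0 : Ff j 0 = (2^(j-1):ℝ)^2 := by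
      unfold Ff; rw [Sg_zero]; simp
    have hFfne : Ff j 0 ≠ 0 := by rw [hFf0]; positivity
    have hqbarc : ContinuousAt (fun q => qbar q j) 0 := by
      have he : (fun q => qbar q j) = fun q => q^2 * Ff j q := funext (fun q => qbar_eq q j)
      rw [he]
      exact (continuousAt_id.pow 2).mul hFfc
    have hqbar0 : qbar 0 j = 0 := by rw [qbar_eq]; ring
    have h1ne : (1:ℝ) - qbar 0 j ≠ 0 := by rw [hqbar0]; norm_num
    have hlog1 : ContinuousAt (fun q => Real.logb 2 (1 - qbar q j)) 0 :=
      ContinuousAt.comp (x := (0:ℝ)) (g := Real.logb 2) (f := fun q => 1 - qbar q j)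
        (Real.continuousAt_logb h1ne) (continuousAt_const.sub hqbarc)
    have hlog2 : ContinuousAt (fun q => Real.logb 2 (Ff j q)) 0 :=
      ContinuousAt.comp (x := (0:ℝ)) (g := Real.logb 2) (f := Ff j)
        (Real.continuousAt_logb hFfne) hFfc
    have hC : Filter.Tendsto (fun q => q * Bf j q) (nhdsWithin 0 (Set.Ioi 0)) (nhds 0) := by
      have := (continuousAt_id.mul hBfc).tendsto.mono_left
        (nhdsWithin_le_nhds (s := Set.Ioi (0:ℝ)))
      simpa only [Pi.mul_def, id_eq, zero_mul] using this
    have hD2 : Filter.Tendsto (fun q : ℝ => Real.log q * q) (nhdsWithin 0 (Set.Ioi 0)) (nhds 0) := by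
      simpa only [Real.rpow_one] using tendsto_log_mul_rpow_nhdsGT_zero zero_lt_one
    have hE : Filter.Tendsto (fun q => Bf j q / Real.log 2) (nhdsWithin 0 (Set.Ioi 0))
        (nhds (Bf j 0 / Real.log 2)) :=
      (hBfc.div_const _).tendsto.mono_left nhdsWithin_le_nhds
    have hT : Filter.Tendsto
        (fun q => (Real.logb 2 (1 - qbar q j) - Real.logb 2 (Ff j q)) * (q * Bf j q)
          - (2 * (Real.log q * q)) * (Bf j q / Real.log 2))
        (nhdsWithin 0 (Set.Ioi 0)) (nhds 0) := by
      have := ((((hlog1.sub hlog2).tendsto.mono_left nhdsWithin_le_nhds)).mul hC).sub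
        (((tendsto_const_nhds (x := (2:ℝ)) (f := nhdsWithin (0:ℝ) (Set.Ioi 0))).mul hD2).mul hE)
      simpa using this
    apply Filter.Tendsto.congr' _ hT
    filter_upwards [hmem] with q hq
    obtain ⟨hb1, hb2, hb3⟩ := key_bounds j hq
    have hpne : 1 - pbar q j ≠ 0 := by rw [pbar_eq_mul]; linarith
    have hder := hasDerivAt_qbar j q hpne
    have hFfpos : 0 < Ff j q := by
      unfold Ff
      have h := Sg_pos_at j hq (j-1)
      exact div_pos (pow_pos h 2) hb3
    have hqne : qbar q j ≠ 0 := ne_of_gt hb1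
    have h1mne : (1:ℝ) - qbar q j ≠ 0 := by linarith
    have hlogq : Real.logb 2 (qbar q j) = 2 * Real.logb 2 q + Real.logb 2 (Ff j q) := by
      rw [qbar_eq, Real.logb_mul (pow_ne_zero 2 (ne_of_gt hq.1)) (ne_of_gt hFfpos), Real.logb_pow]
      push_cast; ring
    rw [hder.deriv, Real.logb_div h1mne hqne, hlogq]
    have hlb : Real.logb 2 q = Real.log q / Real.log 2 := rfl
    rw [hlb]
    ring
  · -- the derivative part
    refine ⟨1/2^(j+1), hεpos, fun q hq => ?_⟩
    obtain ⟨hb1, hb2, hb3⟩ := key_bounds j hq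
    have hpne : 1 - pbar q j ≠ 0 := by rw [pbar_eq_mul]; linarith
    have hder := hasDerivAt_qbar j q hpne
    have hbe := hasDerivAt_binEnt hb1 hb2
    refine ⟨hb1, hb2, ?_⟩
    rw [hder.deriv]
    exact hbe.comp q hder
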